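/- If u is SPR compatible, i.e. u(x_S) = u(x₁) + Σ_{ℓ=2}^{|S|} f(x_ℓ) where x₁ ≥ x₂ ≥ ⋯ are the ordered entries, f(0) = u(0) = 0, and u, f, u - f are all nonnegative nondecreasing functions on ℝ≥0, then u (as a function on tuples) is symmetric, nondecreasing, and submodular, and satisfies u(∅) = 0 and u(0, x₂, …, x_k) = u(x₂, …, x_k). -/

import Mathlib

open scoped NNReal

/-- `u` is symmetric: invariant under permutations of its arguments. -/
def IsSymmU (u : List ℝ≥0 → ℝ) : Prop := ∀ l l' : List ℝ≥0, l.Perm l' → u l = u l'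

/-- `u` is nondecreasing in each argument. -/
def IsMonoU (u : List ℝ≥0 → ℝ) : Prop :=
  ∀ l l' : List ℝ≥0, List.Forall₂ (· ≤ ·) l l' → u l ≤ u l'

/-- `u` is submodular: `u(x∧y)+u(x∨y) ≤ u(x)+u(y)` for equal-length tuples. -/
def IsSubmodU (u : List ℝ≥0 → ℝ) : Prop := ∀ l l' : List ℝ≥0, l.length = l'.length →
  u (List.zipWith min l l') + u (List.zipWith max l l') ≤ u l + u l'

/-- `u` is continuous on tuples of each fixed length. -/
def IsContU (u : List ℝ≥0 → ℝ) : Prop :=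
  ∀ n : ℕ, Continuous (fun v : Fin n → ℝ≥0 => u (List.ofFn v))

/-- Assumption 1: `u(∅)=0`, prepending a zero leaves `u` unchanged, `u` nonnegative,
continuous, symmetric, nondecreasing and submodular. -/
def Assumption1 (u : List ℝ≥0 → ℝ) : Prop :=
  u [] = 0 ∧ (∀ l, u (0 :: l) = u l) ∧ (∀ l, 0 ≤ u l) ∧
    IsContU u ∧ IsSymmU u ∧ IsMonoU u ∧ IsSubmodU u

/-- Assumption 2: the benefit of raising an argument from `0` to `xi` does not
depend on the values of other arguments exceeding `xi`. -/
def Assumption2 (u : List ℝ≥0 → ℝ) : Prop :=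
  ∀ (l : List ℝ≥0) (xi xlo xhi : ℝ≥0), xi ≤ xlo → xlo < xhi →
    u (l ++ [xhi, xi]) - u (l ++ [xhi, 0]) = u (l ++ [xlo, xi]) - u (l ++ [xlo, 0])


lemma M_mono' {l l' : List ℝ≥0} (h : List.Forall₂ (· ≤ ·) l l') :
    l.foldr max 0 ≤ l'.foldr max 0 := by
  induction h with
  | nil => simp
  | cons hab _ ih => exact max_le_max hab ih

lemma sum_mono' (f : ℝ≥0 → ℝ) (hf : Monotone f) {l l' : List ℝ≥0}
    (h : List.Forall₂ (· ≤ ·) l l') : (l.map f).sum ≤ (l'.map f).sum := by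
  induction h with
  | nil => simp
  | cons hab _ ih => simpa using add_le_add (hf hab) ih

lemma M_perm' {l l' : List ℝ≥0} (h : l.Perm l') : l.foldr max 0 = l'.foldr max 0 := by
  induction h with
  | nil => rfl
  | cons a _ ih => simp [ih]
  | swap a b t => simp [← max_assoc, max_comm a b]
  | trans _ _ ih1 ih2 => exact ih1.trans ih2

lemma M_zip_min : ∀ l l' : List ℝ≥0,
    (List.zipWith min l l').foldr max 0 ≤ min (l.foldr max 0) (l'.foldr max 0)
  | [], _ => by simp
  | _ :: _, [] => by simp
  | a :: t, b :: s => by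
    simp only [List.zipWith_cons_cons, List.foldr_cons, max_le_iff]
    refine ⟨min_le_min (le_max_left _ _) (le_max_left _ _),
      (M_zip_min t s).trans (min_le_min (le_max_right _ _) (le_max_right _ _))⟩

lemma M_zip_max : ∀ l l' : List ℝ≥0,
    (List.zipWith max l l').foldr max 0 ≤ max (l.foldr max 0) (l'.foldr max 0)
  | [], _ => by simp
  | _ :: _, [] => by simp
  | a :: t, b :: s => by
    simp only [List.zipWith_cons_cons, List.foldr_cons, max_le_iff]
    refine ⟨⟨le_sup_of_le_left le_sup_left, le_sup_of_le_right le_sup_left⟩,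
      (M_zip_max t s).trans (max_le_max (le_max_right _ _) (le_max_right _ _))⟩

lemma sum_minmax (f : ℝ≥0 → ℝ) : ∀ l l' : List ℝ≥0, l.length = l'.length →
    ((List.zipWith min l l').map f).sum + ((List.zipWith max l l').map f).sum
      = (l.map f).sum + (l'.map f).sum
  | [], [], _ => by simp
  | a :: t, b :: s, h => by
    have ih := sum_minmax f t s (by simpa using h)
    have : f (min a b) + f (max a b) = f a + f b := by
      rcases le_total a b with hab | hab
      · rw [min_eq_left hab, max_eq_right hab]
      · rw [min_eq_right hab, max_eq_left hab]; ring
    simp only [List.zipWith_cons_cons, List.map_cons, List.sum_cons]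
    linarith

/-- If `u` is SPR compatible — on nonempty tuples
`u(x_S) = U(max_i x_i) - f(max_i x_i) + Σ_{i∈S} f(x_i)` with `U, f, U - f`
nonnegative nondecreasing and `U 0 = f 0 = 0` — then `u` is symmetric,
nondecreasing and submodular, vanishes on the empty tuple, and is unchanged
by prepending a zero. -/
theorem stmt_11 (u : List ℝ≥0 → ℝ) (U f : ℝ≥0 → ℝ)
    (hU0 : U 0 = 0) (hf0 : f 0 = 0)
    (hUmono : Monotone U) (hfmono : Monotone f) (hUfmono : Monotone (fun x => U x - f x))
    (hUpos : ∀ x, 0 ≤ U x) (hfpos : ∀ x, 0 ≤ f x) (hUfpos : ∀ x, f x ≤ U x)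
    (hempty : u [] = 0)
    (hSPR : ∀ l : List ℝ≥0, l ≠ [] →
      u l = U (l.foldr max 0) - f (l.foldr max 0) + (l.map f).sum) :
    IsSymmU u ∧ IsMonoU u ∧ IsSubmodU u ∧ u [] = 0 ∧
      (∀ l : List ℝ≥0, u (0 :: l) = u l) := by
  have hF : ∀ l : List ℝ≥0, u l = U (l.foldr max 0) - f (l.foldr max 0) + (l.map f).sum := by
    intro l
    rcases eq_or_ne l [] with rfl | h
    · simp [hempty, hU0, hf0]
    · exact hSPR l h
  refine ⟨?_, ?_, ?_, hempty, ?_⟩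
  · intro l l' h
    rw [hF, hF, M_perm' h, (h.map f).sum_eq]
  · intro l l' h
    rw [hF, hF]
    have h1 := hUfmono (M_mono' h)
    have h2 := sum_mono' f hfmono h
    simp only at h1
    linarith
  · intro l l' hlen
    rw [hF, hF, hF, hF]
    have hs := sum_minmax f l l' hlen
    have h1 := hUfmono (M_zip_min l l')
    have h2 := hUfmono (M_zip_max l l')
    simp only at h1 h2
    have h3 : (U (min (l.foldr max 0) (l'.foldr max 0)) - f (min (l.foldr max 0) (l'.foldr max 0)))
        + (U (max (l.foldr max 0) (l'.foldr max 0)) - f (max (l.foldr max 0) (l'.foldr max 0)))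
        = (U (l.foldr max 0) - f (l.foldr max 0)) + (U (l'.foldr max 0) - f (l'.foldr max 0)) := by
      rcases le_total (l.foldr max 0) (l'.foldr max 0) with hc | hc
      · rw [min_eq_left hc, max_eq_right hc]
      · rw [min_eq_right hc, max_eq_left hc]; ring
    linarith
  · intro l
    rw [hF, hF]
    have hM : (0 :: l).foldr max 0 = l.foldr max 0 := by
      simp [max_eq_right (zero_le : 0 ≤ l.foldr max 0)]
    rw [hM]
    simp [hf0]
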